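/- Let 1 ≤ k ≤ n and let u ∈ ℝ^n be nonzero. There exists a totally positive k×n matrix A with Au = 0 (equivalently, the hyperplane H_u = {[v] ∈ ℝP^{n−1} : u·v = 0} contains a totally positive subspace of projective dimension k−1) if and only if var(u) ≥ k. -/

import Mathlib

open Matrix

/-- The minor of a real `k × n` matrix on a set `S` of `k` columns. -/
noncomputable def minorCols {k n : ℕ} (A : Matrix (Fin k) (Fin n) ℝ)
    (S : Finset (Fin n)) (hS : S.card = k) : ℝ :=
  (A.submatrix id (fun i => ((S.orderIsoOfFin hS) i : Fin n))).det

/-- The minor of a real `n × k` matrix on a set `S` of `k` rows. -/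
noncomputable def minorRows {k n : ℕ} (B : Matrix (Fin n) (Fin k) ℝ)
    (S : Finset (Fin n)) (hS : S.card = k) : ℝ :=
  (B.submatrix (fun i => ((S.orderIsoOfFin hS) i : Fin n)) id).det

/-- A real `k × n` matrix is totally nonnegative if all its maximal (`k × k`) minors
are nonnegative. -/
def IsTotallyNonneg {k n : ℕ} (A : Matrix (Fin k) (Fin n) ℝ) : Prop :=
  ∀ (S : Finset (Fin n)) (hS : S.card = k), 0 ≤ minorCols A S hS

/-- A real `k × n` matrix is totally positive if all its maximal (`k × k`) minors
are strictly positive. -/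
def IsTotallyPos {k n : ℕ} (A : Matrix (Fin k) (Fin n) ℝ) : Prop :=
  ∀ (S : Finset (Fin n)) (hS : S.card = k), 0 < minorCols A S hS

/-- `var v`: the number of sign changes in the sequence `v 0, …, v (n-1)` after the zero
entries are deleted. -/
noncomputable def signVar {n : ℕ} (v : Fin n → ℝ) : ℕ :=
  let l := (List.ofFn v).filter (fun x => x ≠ 0)
  (l.zipWith (· * ·) l.tail).countP (fun x => x < 0)

/-- `v̄ar v`: the maximum of `var w` over all `w` agreeing with `v` in the nonzero entries
of `v`, i.e. the maximal number of sign changes after choosing a sign for each zero entry. -/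
noncomputable def signVarBar {n : ℕ} (v : Fin n → ℝ) : ℕ :=
  sSup {m | ∃ w : Fin n → ℝ, (∀ i, v i ≠ 0 → w i = v i) ∧ m = signVar w}


section Aux

open Set

set_option maxHeartbeats 1000000

private lemma sgn_trans_pos {x y z : ℝ} (h1 : 0 < x * y) (h2 : 0 < x * z) : 0 < y * z := by
  rcases mul_pos_iff.1 h1 with ⟨hx, hy⟩ | ⟨hx, hy⟩ <;>
    rcases mul_pos_iff.1 h2 with ⟨hx', hz⟩ | ⟨hx', hz⟩
  · exact mul_pos hy hz
  · exact absurd hx (not_lt.2 hx'.le)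
  · exact absurd hx' (not_lt.2 hx.le)
  · exact mul_pos_of_neg_of_neg hy hz

private lemma sgn_trans_neg {x y z : ℝ} (h1 : 0 < x * y) (h2 : x * z < 0) : y * z < 0 := by
  rcases mul_pos_iff.1 h1 with ⟨hx, hy⟩ | ⟨hx, hy⟩ <;>
    rcases mul_neg_iff.1 h2 with ⟨hx', hz⟩ | ⟨hx', hz⟩
  · exact mul_neg_of_pos_of_neg hy hz
  · exact absurd hx' (not_lt.2 hx.le)
  · exact absurd hx (not_lt.2 hx'.le)
  · exact mul_neg_of_neg_of_pos hy hz

section ListPart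

variable {α : Type*} (v : α → ℝ)

/-- number of sign changes of `v` along the list `Q`. -/
noncomputable def scv (Q : List α) : ℕ :=
  (List.zipWith (fun i j => v i * v j) Q Q.tail).countP (fun x => x < 0)

lemma scv_singleton (a : α) : scv v [a] = 0 := rfl

lemma scv_cons2 (a b : α) (t : List α) :
    scv v (a :: b :: t) = scv v (b :: t) + (if v a * v b < 0 then 1 else 0) := by
  simp only [scv, List.zipWith, List.tail, List.countP_cons, decide_eq_true_eq]

variable {v}

private lemma pos_of_ne {a b : α} (ha : v a ≠ 0) (hb : v b ≠ 0) (h : ¬ v a * v b < 0) :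
    0 < v a * v b := by
  rcases (mul_ne_zero ha hb).lt_or_gt with h' | h'
  · exact absurd h' h
  · exact h'

/-- extraction of an alternating subsequence realizing all sign changes. -/
lemma exists_alt_chain : ∀ (Q : List α), Q ≠ [] → (∀ j ∈ Q, v j ≠ 0) →
    ∃ Q', Q'.Sublist Q ∧ Q'.length = scv v Q + 1 ∧
      List.Chain' (fun i j => v i * v j < 0) Q' ∧ Q'.head? = Q.head? := by
  intro Q
  induction Q with
  | nil => intro h; exact absurd rfl h
  | cons a t ih =>
    intro _ hnz
    cases t with
    | nil => exact ⟨[a], List.Sublist.refl _, by simp [scv_singleton], List.isChain_singleton _, rfl⟩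
    | cons b t =>
      obtain ⟨Q', hsub, hlen, hchain, hhead⟩ := ih (by simp)
        (fun j hj => hnz j (List.mem_cons_of_mem a hj))
      obtain ⟨c, Q'', rfl⟩ : ∃ c Q'', Q' = c :: Q'' := by
        cases Q' with
        | nil => simp at hlen
        | cons c Q'' => exact ⟨c, Q'', rfl⟩
      obtain rfl : c = b := by simpa using hhead
      by_cases hab : v a * v c < 0
      · refine ⟨a :: c :: Q'', List.Sublist.cons₂ a hsub, ?_, ?_, rfl⟩
        · simp only [List.length_cons] at hlen ⊢
          rw [scv_cons2, if_pos hab]; omega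
        · simp only [List.Chain', List.isChain_cons_cons]; exact ⟨hab, hchain⟩
      · have hab' : 0 < v a * v c :=
          pos_of_ne (hnz a (by simp)) (hnz c (by simp)) hab
        have hsub' : (a :: Q'').Sublist (a :: c :: t) :=
          List.cons_sublist_cons.2 ((List.sublist_cons_self c Q'').trans hsub)
        refine ⟨a :: Q'', hsub', ?_, ?_, rfl⟩
        · simp only [List.length_cons] at hlen ⊢
          rw [scv_cons2, if_neg hab]; omega
        · cases Q'' with
          | nil => exact List.isChain_singleton _
          | cons d Q₃ =>
            simp only [List.Chain', List.isChain_cons_cons] at hchain ⊢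
            exact ⟨sgn_trans_neg (mul_comm (v a) (v c) ▸ hab') hchain.1, hchain.2⟩

/-- a list with no sign changes has constant sign. -/
lemma scv_zero_const : ∀ (Q : List α), (∀ j ∈ Q, v j ≠ 0) → scv v Q = 0 →
    ∀ a, Q.head? = some a → ∀ i ∈ Q, 0 < v a * v i := by
  intro Q
  induction Q with
  | nil => intro _ _ a ha; simp at ha
  | cons x t ih =>
    intro hnz hsc a ha i hi
    obtain rfl : x = a := by simpa using ha
    cases t with
    | nil =>
      simp only [List.mem_singleton] at hi
      rw [hi]; exact mul_self_pos.2 (hnz x (by simp))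
    | cons y t' =>
      rw [scv_cons2] at hsc
      have h1 : scv v (y :: t') = 0 := by omega
      have h2 : ¬ (v x * v y < 0) := by
        by_contra h; rw [if_pos h] at hsc; omega
      have hxy : 0 < v x * v y := pos_of_ne (hnz x (by simp)) (hnz y (by simp)) h2
      rcases List.mem_cons.1 hi with rfl | hi'
      · exact mul_self_pos.2 (hnz i (by simp))
      · have := ih (fun j hj => hnz j (List.mem_cons_of_mem x hj)) h1 y rfl i hi'
        exact sgn_trans_pos (mul_comm (v x) (v y) ▸ hxy) this

private lemma flatten_map_singleton (Q : List α) : (Q.map (fun a => [a])).flatten = Q := by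
  induction Q with
  | nil => rfl
  | cons a t ih => simp [ih]

/-- partition of a list into `k` consecutive nonempty sign-constant blocks. -/
lemma exists_partition : ∀ (Q : List α) (k : ℕ), 1 ≤ k → (∀ j ∈ Q, v j ≠ 0) →
    scv v Q < k → k ≤ Q.length →
    ∃ L : List (List α), L.length = k ∧ L.flatten = Q ∧
      (∀ b ∈ L, b ≠ [] ∧ ∀ i ∈ b, ∀ i' ∈ b, 0 < v i * v i') := by
  suffices H : ∀ (Q : List α) (k : ℕ), 1 ≤ k → (∀ j ∈ Q, v j ≠ 0) →
      scv v Q < k → k ≤ Q.length →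
      ∃ L : List (List α), L.length = k ∧ L.flatten = Q ∧
        (∀ b ∈ L, b ≠ [] ∧ ∀ i ∈ b, ∀ i' ∈ b, 0 < v i * v i') ∧
        (∀ b, L.head? = some b → b.head? = Q.head?) by
    intro Q k h1 h2 h3 h4
    obtain ⟨L, hL1, hL2, hL3, _⟩ := H Q k h1 h2 h3 h4
    exact ⟨L, hL1, hL2, hL3⟩
  intro Q
  induction Q with
  | nil => intro k hk _ _ hlen; simp at hlen; omega
  | cons a t ih =>
    intro k hk hnz hsc hlen
    rcases eq_or_lt_of_le hlen with heq | hlt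
    · -- singletons
      refine ⟨(a :: t).map (fun x => [x]), by simpa using heq.symm,
        flatten_map_singleton _, ?_, ?_⟩
      · intro b hb
        obtain ⟨x, hx, rfl⟩ := List.mem_map.1 hb
        refine ⟨by simp, ?_⟩
        intro i hi i' hi'
        simp only [List.mem_singleton] at hi hi'
        rw [hi, hi']; exact mul_self_pos.2 (hnz x hx)
      · intro b hb
        simp only [List.map_cons, List.head?_cons, Option.some_inj] at hb
        rw [← hb]; try rfl
    · rcases eq_or_lt_of_le hk with hk1 | hk2
      · -- k = 1 : one block, sign constant
        refine ⟨[a :: t], by simp; omega, by simp, ?_, ?_⟩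
        · intro b hb
          simp only [List.mem_singleton] at hb
          rw [hb]
          refine ⟨by simp, ?_⟩
          have hsc0 : scv v (a :: t) = 0 := by omega
          intro i hi i' hi'
          exact sgn_trans_pos (scv_zero_const _ hnz hsc0 a rfl i hi)
            (scv_zero_const _ hnz hsc0 a rfl i' hi')
        · intro b hb; simp only [List.head?_cons, Option.some_inj] at hb; rw [← hb]; try rfl
      · -- k ≥ 2, so t nonempty
        obtain ⟨b, t₂, rfl⟩ : ∃ b t₂, t = b :: t₂ := by
          cases t with
          | nil => exfalso; simp at hlt; omega
          | cons b t₂ => exact ⟨b, t₂, rfl⟩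
        have hnzt : ∀ j ∈ b :: t₂, v j ≠ 0 := fun j hj => hnz j (List.mem_cons_of_mem a hj)
        by_cases hab : v a * v b < 0
        · -- split off [a]
          have hsct : scv v (b :: t₂) < k - 1 := by
            rw [scv_cons2, if_pos hab] at hsc; omega
          obtain ⟨L', hL'len, hL'flat, hL'blocks, _⟩ :=
            ih (k - 1) (by omega) hnzt hsct (by simp at hlt ⊢; omega)
          refine ⟨[a] :: L', by simp [hL'len]; omega, by simp [hL'flat], ?_, ?_⟩
          · intro bl hbl
            rcases List.mem_cons.1 hbl with rfl | hbl'
            · refine ⟨by simp, ?_⟩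
              intro i hi i' hi'
              simp only [List.mem_singleton] at hi hi'
              rw [hi, hi']; exact mul_self_pos.2 (hnz a (by simp))
            · exact hL'blocks bl hbl'
          · intro bl hbl
            simp only [List.head?_cons, Option.some_inj] at hbl; rw [← hbl]; try rfl
        · -- merge a into first block
          have hab' : 0 < v a * v b :=
            pos_of_ne (hnz a (by simp)) (hnz b (by simp)) hab
          have hsct : scv v (b :: t₂) < k := by
            rw [scv_cons2, if_neg hab] at hsc; omega
          obtain ⟨L', hL'len, hL'flat, hL'blocks, hL'head⟩ :=
            ih k hk hnzt hsct (by simp at hlt ⊢; omega)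
          obtain ⟨b₀, L₂, rfl⟩ : ∃ b₀ L₂, L' = b₀ :: L₂ := by
            cases L' with
            | nil => exfalso; simp at hL'len; omega
            | cons b₀ L₂ => exact ⟨b₀, L₂, rfl⟩
          obtain ⟨c, r, rfl⟩ : ∃ c r, b₀ = c :: r := by
            cases b₀ with
            | nil => exact absurd rfl (hL'blocks [] (by simp)).1
            | cons c r => exact ⟨c, r, rfl⟩
          obtain rfl : c = b := by simpa using hL'head (c :: r) rfl
          have hblk := hL'blocks (c :: r) (by simp)
          refine ⟨(a :: c :: r) :: L₂, by simpa using hL'len, ?_, ?_, ?_⟩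
          · simp only [List.flatten_cons] at hL'flat ⊢
            rw [List.cons_append, hL'flat]
          · intro bl hbl
            rcases List.mem_cons.1 hbl with rfl | hbl'
            · refine ⟨by simp, ?_⟩
              have hbmem : ∀ i ∈ a :: c :: r, 0 < v c * v i := by
                intro i hi
                rcases List.mem_cons.1 hi with hi0 | hi'
                · rw [hi0]; exact mul_comm (v a) (v c) ▸ hab'
                · exact hblk.2 c (by simp) i hi'
              intro i hi i' hi'
              exact sgn_trans_pos (hbmem i hi) (hbmem i' hi')
            · exact hL'blocks bl (List.mem_cons_of_mem _ hbl')
          · intro bl hbl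
            simp only [List.head?_cons, Option.some_inj] at hbl; rw [← hbl]; try rfl

end ListPart


/-- A nontrivial linear combination of distinct real powers cannot vanish at `k`
distinct positive points. -/
lemma exp_ind : ∀ (k : ℕ) (a c : Fin k → ℝ) (z : Fin k → ℝ),
    Function.Injective a → StrictMono z → (∀ j, 0 < z j) →
    (∀ j, ∑ i, c i * (z j) ^ (a i) = 0) → c = 0 := by
  intro k
  induction k with
  | zero => intro a c z _ _ _ _; funext i; exact i.elim0
  | succ k ih =>
    intro a c z ha hz hzp hroot
    set b : Fin (k + 1) → ℝ := fun i => a i - a 0 with hb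
    set g : ℝ → ℝ := fun x => ∑ i, c i * x ^ (b i) with hg
    set h : ℝ → ℝ := fun x => ∑ i, c i * (b i * x ^ (b i - 1)) with hh
    have hgz : ∀ j, g (z j) = 0 := by
      intro j
      have : g (z j) = (∑ i, c i * (z j) ^ (a i)) / (z j) ^ (a 0) := by
        rw [Finset.sum_div]
        exact Finset.sum_congr rfl (fun i _ => by
          simp only [hb]
          rw [Real.rpow_sub (hzp j)]; ring)
      rw [this, hroot j, zero_div]
    have hderiv : ∀ x : ℝ, 0 < x → HasDerivAt g (h x) x := by
      intro x hx
      apply HasDerivAt.fun_sum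
      intro i _
      exact (Real.hasDerivAt_rpow_const (Or.inl hx.ne')).const_mul (c i)
    -- Rolle
    have hrolle : ∀ j : Fin k, ∃ y ∈ Ioo (z j.castSucc) (z j.succ), h y = 0 := by
      intro j
      have hlt : z j.castSucc < z j.succ := hz Fin.castSucc_lt_succ
      have hcont : ContinuousOn g (Icc (z j.castSucc) (z j.succ)) := by
        intro x hx
        exact ((hderiv x (lt_of_lt_of_le (hzp _) hx.1)).continuousAt).continuousWithinAt
      have := exists_hasDerivAt_eq_zero hlt hcont (by rw [hgz, hgz])
        (fun x hx => hderiv x (lt_trans (hzp _) hx.1))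
      exact this
    choose y hy hyroot using hrolle
    have hy' : StrictMono y := by
      intro j j' hjj'
      have h1 : y j < z j.succ := (hy j).2
      have h2 : z j'.castSucc < y j' := (hy j').1
      have h3 : z j.succ ≤ z j'.castSucc := by
        apply hz.monotone
        simp only [Fin.le_def, Fin.val_succ, Fin.coe_castSucc]
        exact hjj'
      linarith
    have hyp : ∀ j, 0 < y j := fun j => lt_trans (hzp _) (hy j).1
    have hinj : Function.Injective (fun i : Fin k => b i.succ - 1) := by
      intro i i' hii'
      simp only at hii'
      have : a i.succ = a i'.succ := by
        simp only [hb] at hii'; linarith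
      exact Fin.succ_injective _ (ha this)
    have hsum : ∀ j, ∑ i : Fin k, (c i.succ * b i.succ) * (y j) ^ (b i.succ - 1) = 0 := by
      intro j
      have h0 : ∑ i : Fin (k+1), c i * (b i * (y j) ^ (b i - 1)) = 0 := hyroot j
      rw [Fin.sum_univ_succ] at h0
      have hb0 : b 0 = 0 := by simp [hb]
      rw [hb0] at h0
      simp only [zero_mul, mul_zero, zero_add] at h0
      rw [← h0]
      exact Finset.sum_congr rfl (fun i _ => by ring)
    have hc' := ih (fun i => b i.succ - 1) (fun i => c i.succ * b i.succ) y hinj hy' hyp hsum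
    have hcs : ∀ i : Fin k, c i.succ = 0 := by
      intro i
      have := congrFun hc' i
      simp only [Pi.zero_apply] at this
      have hbne : b i.succ ≠ 0 := by
        simp only [hb, sub_ne_zero]
        exact fun hcon => (Fin.succ_ne_zero i) (ha hcon)
      exact (mul_eq_zero.1 this).resolve_right hbne
    have hc0 : c 0 = 0 := by
      have := hroot 0
      rw [Fin.sum_univ_succ] at this
      simp only [hcs, zero_mul, Finset.sum_const_zero, add_zero] at this
      have := mul_eq_zero.1 this
      rcases this with h' | h'
      · exact h'
      · exact absurd h' (Real.rpow_pos_of_pos (hzp 0) _).ne'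
    funext i
    refine Fin.cases ?_ ?_ i
    · exact hc0
    · exact hcs

/-- nonvanishing of generalized Vandermonde determinants. -/
lemma gv_det_ne_zero {m : ℕ} (x a : Fin m → ℝ) (hxp : ∀ t, 0 < x t)
    (hx : StrictMono x) (ha : Function.Injective a) :
    (Matrix.of fun i t => (x t) ^ (a i) : Matrix (Fin m) (Fin m) ℝ).det ≠ 0 := by
  intro hdet
  obtain ⟨v, hv, hvM⟩ := Matrix.exists_vecMul_eq_zero_iff.2 hdet
  apply hv
  apply exp_ind m a v x ha hx hxp
  intro j
  have := congrFun hvM j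
  simp only [Matrix.vecMul, dotProduct, Pi.zero_apply, Matrix.of_apply] at this
  exact this

/-- positivity of generalized Vandermonde determinants. -/
lemma gv_det_pos {m : ℕ} (x a : Fin m → ℝ) (hxp : ∀ t, 0 < x t)
    (hx : StrictMono x) (ha : StrictMono a) :
    0 < (Matrix.of fun i t => (x t) ^ (a i) : Matrix (Fin m) (Fin m) ℝ).det := by
  set e : ℝ → Fin m → ℝ := fun s i => (1 - s) * a i + s * (i : ℕ) with he
  set D : ℝ → ℝ := fun s => (Matrix.of fun i t => (x t) ^ (e s i) : Matrix (Fin m) (Fin m) ℝ).det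
    with hD
  have hmono : ∀ s ∈ Icc (0:ℝ) 1, StrictMono (e s) := by
    intro s hs i i' hii'
    have h1 : a i < a i' := ha hii'
    have h2 : ((i:ℕ):ℝ) < ((i':ℕ):ℝ) := by exact_mod_cast hii'
    rcases eq_or_lt_of_le hs.1 with h0 | h0
    · simp only [he, ← h0]; ring_nf; nlinarith
    · rcases eq_or_lt_of_le hs.2 with h1' | h1'
      · simp only [he, h1']; ring_nf; nlinarith
      · simp only [he]; nlinarith
  have hcont : Continuous D := by
    apply Continuous.matrix_det
    apply continuous_matrix
    intro i t
    have : (fun s => (x t) ^ (e s i)) = fun s => Real.exp (Real.log (x t) * (e s i)) := by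
      funext s; exact Real.rpow_def_of_pos (hxp t) _
    simp only [Matrix.of_apply]
    rw [this]
    apply Real.continuous_exp.comp
    apply Continuous.mul continuous_const
    simp only [he]
    fun_prop
  have hne : ∀ s ∈ Icc (0:ℝ) 1, D s ≠ 0 := by
    intro s hs
    exact gv_det_ne_zero x (e s) hxp hx (hmono s hs).injective
  have hD1 : 0 < D 1 := by
    have hentry : (Matrix.of fun i t => (x t) ^ (e 1 i) : Matrix (Fin m) (Fin m) ℝ)
        = (Matrix.vandermonde x).transpose := by
      ext i t
      simp only [Matrix.of_apply, Matrix.transpose_apply, Matrix.vandermonde_apply, he]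
      rw [show (1 - (1:ℝ)) * a i + 1 * ((i:ℕ):ℝ) = ((i:ℕ):ℝ) by ring, Real.rpow_natCast]
    rw [hD]
    simp only
    rw [hentry, Matrix.det_transpose, Matrix.det_vandermonde]
    apply Finset.prod_pos
    intro i _
    apply Finset.prod_pos
    intro j hj
    have : i < j := Finset.mem_Ioi.1 hj
    exact sub_pos.2 (hx this)
  have hD0 : D 0 = (Matrix.of fun i t => (x t) ^ (a i) : Matrix (Fin m) (Fin m) ℝ).det := by
    rw [hD]; simp only
    congr 1
    ext i t
    simp only [Matrix.of_apply, he]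
    norm_num
  by_contra hcon
  push_neg at hcon
  have hD0ne : D 0 ≠ 0 := hne 0 ⟨le_refl _, zero_le_one⟩
  have hD0lt : D 0 < 0 :=
    lt_of_le_of_ne (by rw [hD0]; exact hcon) hD0ne
  have : (0:ℝ) ∈ Icc (D 0) (D 1) := ⟨hD0lt.le, hD1.le⟩
  obtain ⟨s, hs, hseq⟩ := intermediate_value_Icc zero_le_one hcont.continuousOn this
  exact hne s hs hseq

-- helper 1
lemma signVar_eq_scv {n : ℕ} (u : Fin n → ℝ) :
    signVar u = scv u ((List.finRange n).filter ((fun x : ℝ => x ≠ 0) ∘ u)) := by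
  unfold signVar scv
  simp only [List.ofFn_eq_map, List.filter_map, ← List.map_tail, List.zipWith_map]

-- helper 2
lemma minorCols_eq {k n : ℕ} (A : Matrix (Fin k) (Fin n) ℝ) (S : Finset (Fin n))
    (hS : S.card = k) :
    minorCols A S hS = (A.submatrix id (S.orderEmbOfFin hS)).det := by
  unfold minorCols
  congr 1

-- helper 3
lemma det_pick_pos {k n : ℕ} {A : Matrix (Fin k) (Fin n) ℝ} (hA : IsTotallyPos A)
    {p : Fin k → Fin n} (hp : StrictMono p) : 0 < (A.submatrix id p).det := by
  have hT : (Finset.image p Finset.univ).card = k := by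
    rw [Finset.card_image_of_injective _ hp.injective, Finset.card_univ, Fintype.card_fin]
  have h := hA _ hT
  rw [minorCols_eq] at h
  have hq := Finset.orderEmbOfFin_unique hT
    (f := p) (fun x => Finset.mem_image_of_mem p (Finset.mem_univ x)) hp
  rwa [← hq] at h

-- helper 4
lemma exists_root_of_sign_change {f : ℝ → ℝ} (hf : Continuous f) {a b : ℝ} (hab : a < b)
    (h : f a * f b < 0) : ∃ x ∈ Ioo a b, f x = 0 := by
  rcases mul_neg_iff.1 h with ⟨ha, hb⟩ | ⟨ha, hb⟩
  · obtain ⟨x, hx, hfx⟩ := intermediate_value_Ioo' hab.le hf.continuousOn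
      (show (0:ℝ) ∈ Ioo (f b) (f a) from ⟨hb, ha⟩)
    exact ⟨x, hx, hfx⟩
  · obtain ⟨x, hx, hfx⟩ := intermediate_value_Ioo hab.le hf.continuousOn
      (show (0:ℝ) ∈ Ioo (f a) (f b) from ⟨ha, hb⟩)
    exact ⟨x, hx, hfx⟩

-- helper 5
lemma exp_rpow' (w y : ℝ) : (Real.exp w) ^ y = Real.exp (w * y) := by
  rw [Real.rpow_def_of_pos (Real.exp_pos w), Real.log_exp]

lemma stmt4_mp (k n : ℕ) (hk : 1 ≤ k) (hkn : k ≤ n) (u : Fin n → ℝ) (hu : u ≠ 0)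
    (A : Matrix (Fin k) (Fin n) ℝ) (hA : IsTotallyPos A) (hAu : A.mulVec u = 0) :
    k ≤ signVar u := by
  by_contra hcon
  push_neg at hcon
  set P := (List.finRange n).filter ((fun x : ℝ => x ≠ 0) ∘ u) with hP
  have hPmem : ∀ j, j ∈ P ↔ u j ≠ 0 := by
    intro j
    simp [hP, List.mem_filter, Function.comp, List.mem_finRange]
  have hPpw : P.Pairwise (· < ·) := (List.pairwise_lt_finRange n).filter _
  have hsv : signVar u = scv u P := signVar_eq_scv u
  have hscP : scv u P < k := by rw [← hsv]; exact hcon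
  rcases lt_or_ge P.length k with hr | hr
  · -- small support case
    have hcard : P.toFinset.card ≤ k := le_trans P.toFinset_card_le hr.le
    obtain ⟨T, hPT, _, hTcard⟩ := Finset.exists_subsuperset_card_eq
      (Finset.subset_univ P.toFinset) hcard (by simpa using hkn)
    have hmin := hA T hTcard
    rw [minorCols_eq] at hmin
    set σ := T.orderEmbOfFin hTcard with hσ
    have hTim : Finset.image (fun t => σ t) Finset.univ = T := by
      apply Finset.coe_injective
      rw [Finset.coe_image, Finset.coe_univ, Set.image_univ]
      rw [show Set.range (fun t => σ t) = Set.range σ from rfl]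
      rw [Finset.range_orderEmbOfFin]
    have hdet : (A.submatrix id σ).det = 0 := by
      apply Matrix.exists_mulVec_eq_zero_iff.1
      refine ⟨fun t => u (σ t), ?_, ?_⟩
      · obtain ⟨j, hj⟩ := Function.ne_iff.1 hu
        have hjT : j ∈ T := hPT (by rw [List.mem_toFinset, hPmem]; exact hj)
        have : j ∈ Set.range σ := by rw [Finset.range_orderEmbOfFin]; exact_mod_cast hjT
        obtain ⟨t, ht⟩ := this
        intro hc
        have := congrFun hc t
        simp only [Pi.zero_apply] at this
        rw [ht] at this
        exact hj this
      · funext i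
        have h1 : ((A.submatrix id σ).mulVec fun t => u (σ t)) i
            = ∑ t, A i (σ t) * u (σ t) := by
          simp [Matrix.mulVec, dotProduct, Matrix.submatrix_apply]
        have h2 : ∑ t, A i (σ t) * u (σ t) = ∑ j ∈ T, A i j * u j := by
          rw [← hTim, Finset.sum_image (fun x _ y _ h => σ.injective h)]
        have h3 : ∑ j ∈ T, A i j * u j = ∑ j, A i j * u j := by
          apply Finset.sum_subset (Finset.subset_univ T)
          intro j _ hjT
          have : u j = 0 := by
            by_contra hne
            exact hjT (hPT (by rw [List.mem_toFinset, hPmem]; exact hne))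
          rw [this, mul_zero]
        have h4 : ∑ j, A i j * u j = 0 := by
          have := congrFun hAu i
          simpa [Matrix.mulVec, dotProduct] using this
        rw [h1, h2, h3, h4]; rfl
    rw [hdet] at hmin
    exact lt_irrefl 0 hmin
  · -- partition case
    have hPne : ∀ j ∈ P, u j ≠ 0 := fun j hj => (hPmem j).1 hj
    obtain ⟨L, hLlen, hLflat, hLblocks⟩ := exists_partition P k hk hPne hscP hr
    set Blk : Fin k → List (Fin n) := fun s => L.get (Fin.cast hLlen.symm s) with hBlk
    have hBlkmemL : ∀ s, Blk s ∈ L := fun s => L.get_mem _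
    have hbne : ∀ s, Blk s ≠ [] := fun s => (hLblocks _ (hBlkmemL s)).1
    have hsgn : ∀ s, ∀ i ∈ Blk s, ∀ i' ∈ Blk s, 0 < u i * u i' :=
      fun s => (hLblocks _ (hBlkmemL s)).2
    have hflatpw : L.flatten.Pairwise (· < ·) := by rw [hLflat]; exact hPpw
    have hbetween := (List.pairwise_flatten.1 hflatpw).2
    have hord : ∀ {s s' : Fin k}, s < s' → ∀ i ∈ Blk s, ∀ i' ∈ Blk s', i < i' := by
      intro s s' hss'
    -- use pairwise_iff_get
      have := List.pairwise_iff_get.1 hbetween (Fin.cast hLlen.symm s) (Fin.cast hLlen.symm s')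
        (by simp only [Fin.lt_def, Fin.coe_cast]; exact hss')
      exact this
    set S : Fin k → Finset (Fin n) := fun s => (Blk s).toFinset with hS
    have hSmem : ∀ s j, j ∈ S s ↔ j ∈ Blk s := by intro s j; rw [hS]; exact List.mem_toFinset
    set B : Fin n → (Fin k → ℝ) := fun j i => A i j with hB
    set M : Matrix (Fin k) (Fin k) ℝ := Matrix.of fun s => ∑ j ∈ S s, u j • B j with hM
    -- M is singular
    have hMdet : M.det = 0 := by
      apply Matrix.exists_vecMul_eq_zero_iff.1
      refine ⟨fun _ => (1:ℝ), ?_, ?_⟩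
      · intro hc
        have := congrFun hc ⟨0, hk⟩
        simp at this
      · funext i
        have h1 : (Matrix.vecMul (fun _ => (1:ℝ)) M) i = ∑ s, ∑ j ∈ S s, u j * A i j := by
          simp only [Matrix.vecMul, dotProduct, one_mul, hM, Matrix.of_apply]
          apply Finset.sum_congr rfl
          intro s _
          rw [Finset.sum_apply]
          apply Finset.sum_congr rfl
          intro j _
          simp [hB]
        have hdisj : (↑(Finset.univ : Finset (Fin k)) : Set (Fin k)).PairwiseDisjoint S := by
          intro s _ s' _ hss'
          rcases lt_or_gt_of_ne hss' with h | h
          · apply Finset.disjoint_left.2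
            intro j hj hj'
            exact lt_irrefl j (hord h j ((hSmem s j).1 hj) j ((hSmem s' j).1 hj'))
          · apply Finset.disjoint_left.2
            intro j hj hj'
            exact lt_irrefl j (hord h j ((hSmem s' j).1 hj') j ((hSmem s j).1 hj))
        have h2 : ∑ s, ∑ j ∈ S s, u j * A i j
            = ∑ j ∈ Finset.univ.biUnion S, u j * A i j :=
          (Finset.sum_biUnion hdisj).symm
        have h3 : ∑ j ∈ Finset.univ.biUnion S, u j * A i j = ∑ j, u j * A i j := by
          apply Finset.sum_subset (Finset.subset_univ _)
          intro j _ hj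
          have hju : u j = 0 := by
            by_contra hne
            apply hj
            have hjP : j ∈ P := (hPmem j).2 hne
            rw [← hLflat] at hjP
            obtain ⟨bl, hbl, hjbl⟩ := List.mem_flatten.1 hjP
            obtain ⟨idx, hidx⟩ := List.get_of_mem hbl
            refine Finset.mem_biUnion.2 ⟨Fin.cast hLlen idx, Finset.mem_univ _, ?_⟩
            rw [hSmem]
            have : Blk (Fin.cast hLlen idx) = bl := by
              rw [hBlk, ← hidx]
              congr 1
            rw [this]; exact hjbl
          rw [hju, zero_mul]
        have h4 : ∑ j, u j * A i j = 0 := by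
          have := congrFun hAu i
          simp only [Matrix.mulVec, dotProduct, Pi.zero_apply] at this
          rw [← this]
          exact Finset.sum_congr rfl (fun j _ => mul_comm _ _)
        rw [h1, h2, h3, h4]; rfl
    -- expansion of the determinant
    have hexp : M.det = ∑ p ∈ Fintype.piFinset S,
        (∏ s, u (p s)) * (A.submatrix id p).det := by
      have h1 : M.det = Matrix.detRowAlternating (fun s => ∑ j ∈ S s, u j • B j) := rfl
      rw [h1]
      rw [show (Matrix.detRowAlternating (fun s => ∑ j ∈ S s, u j • B j) : ℝ)
        = (Matrix.detRowAlternating (R := ℝ) (n := Fin k)).toMultilinearMap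
            (fun s => ∑ j ∈ S s, u j • B j) from rfl]
      rw [MultilinearMap.map_sum_finset _ (fun s j => u j • B j) S]
      apply Finset.sum_congr rfl
      intro p _
      have h2 : (Matrix.detRowAlternating (R := ℝ) (n := Fin k)).toMultilinearMap
          (fun s => u (p s) • B (p s))
          = (∏ s, u (p s)) • (Matrix.detRowAlternating (R := ℝ) (n := Fin k)).toMultilinearMap
            (fun s => B (p s)) :=
        MultilinearMap.map_smul_univ _ (fun s => u (p s)) (fun s => B (p s))
      rw [h2, smul_eq_mul]
      congr 1
      have h3 : (Matrix.detRowAlternating (R := ℝ) (n := Fin k)).toMultilinearMap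
          (fun s => B (p s)) = (Matrix.of fun s i => A i (p s)).det := rfl
      rw [h3]
      have h4 : (Matrix.of fun s i => A i (p s)) = (A.submatrix id p).transpose := rfl
      rw [h4, Matrix.det_transpose]
    -- every pick gives a strictly positive minor
    have hpickmono : ∀ p ∈ Fintype.piFinset S, StrictMono p := by
      intro p hp s s' hss'
      have h1 : p s ∈ Blk s := (hSmem s _).1 (Fintype.mem_piFinset.1 hp s)
      have h2 : p s' ∈ Blk s' := (hSmem s' _).1 (Fintype.mem_piFinset.1 hp s')
      exact hord hss' _ h1 _ h2
    set p₀ : Fin k → Fin n := fun s => (Blk s).head (hbne s) with hp₀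
    have hp₀mem : p₀ ∈ Fintype.piFinset S := by
      apply Fintype.mem_piFinset.2
      intro s
      rw [hSmem]
      exact List.head_mem (hbne s)
    set F : (Fin k → Fin n) → ℝ := fun p => (∏ s, u (p s)) * (A.submatrix id p).det with hF
    have hsum0 : ∑ p ∈ Fintype.piFinset S, F p = 0 := by rw [← hexp]; exact hMdet
    have hterm : ∀ p ∈ Fintype.piFinset S, 0 < F p * F p₀ := by
      intro p hp
      have hdp : 0 < (A.submatrix id p).det := det_pick_pos hA (hpickmono p hp)
      have hdp₀ : 0 < (A.submatrix id p₀).det := det_pick_pos hA (hpickmono p₀ hp₀mem)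
      have hprod : 0 < ∏ s, (u (p s) * u (p₀ s)) := by
        apply Finset.prod_pos
        intro s _
        exact hsgn s _ ((hSmem s _).1 (Fintype.mem_piFinset.1 hp s)) _
          ((hSmem s _).1 (Fintype.mem_piFinset.1 hp₀mem s))
      have heq : F p * F p₀ = (∏ s, (u (p s) * u (p₀ s)))
          * ((A.submatrix id p).det * (A.submatrix id p₀).det) := by
        rw [hF]
        simp only
        rw [Finset.prod_mul_distrib]
        ring
      rw [heq]
      exact mul_pos hprod (mul_pos hdp hdp₀)
    have hpos : 0 < ∑ p ∈ Fintype.piFinset S, F p * F p₀ :=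
      Finset.sum_pos hterm ⟨p₀, hp₀mem⟩
    rw [← Finset.sum_mul, hsum0, zero_mul] at hpos
    exact lt_irrefl 0 hpos

lemma stmt4_mpr (k n : ℕ) (hk : 1 ≤ k) (hkn : k ≤ n) (u : Fin n → ℝ) (hu : u ≠ 0)
    (hvar : k ≤ signVar u) :
    ∃ A : Matrix (Fin k) (Fin n) ℝ, IsTotallyPos A ∧ A.mulVec u = 0 := by
  classical
  set P := (List.finRange n).filter ((fun x : ℝ => x ≠ 0) ∘ u) with hP
  have hPmem : ∀ j, j ∈ P ↔ u j ≠ 0 := by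
    intro j
    simp [hP, List.mem_filter, Function.comp, List.mem_finRange]
  have hPpw : P.Pairwise (· < ·) := (List.pairwise_lt_finRange n).filter _
  have hPne : ∀ j ∈ P, u j ≠ 0 := fun j hj => (hPmem j).1 hj
  have hPnil : P ≠ [] := by
    obtain ⟨j, hj⟩ := Function.ne_iff.1 hu
    exact List.ne_nil_of_mem ((hPmem j).2 hj)
  have hsv : k ≤ scv u P := by rw [← signVar_eq_scv]; exact hvar
  obtain ⟨Q', hsub, hlen, hchain, _⟩ := exists_alt_chain P hPnil hPne
  set Q2 := Q'.take (k + 1) with hQ2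
  have hlen2 : Q2.length = k + 1 := by
    rw [hQ2, List.length_take, hlen]
    omega
  have hchain2 : List.Chain' (fun i j => u i * u j < 0) Q2 := hchain.take _
  have hsub2 : Q2.Sublist P := (List.take_sublist _ _).trans hsub
  have hpw2 : Q2.Pairwise (· < ·) := hPpw.sublist hsub2
  set q : Fin (k + 1) → Fin n := fun t => Q2.get (Fin.cast hlen2.symm t) with hq
  have hqmono : StrictMono q := by
    intro t t' h
    exact List.pairwise_iff_get.1 hpw2 _ _ (by simp only [Fin.lt_def, Fin.coe_cast]; exact h)
  have hqmem : ∀ t, u (q t) ≠ 0 := by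
    intro t
    apply hPne
    apply hsub2.subset
    exact List.get_mem Q2 (Fin.cast hlen2.symm t)
  have hflip : ∀ t : Fin k, u (q t.castSucc) * u (q t.succ) < 0 := by
    intro t
    have ht := t.isLt
    have hlt : t.val < Q2.length - 1 := by rw [hlen2]; omega
    have := List.isChain_iff_getElem.1 hchain2 t.val (by omega)
    simpa [hq] using this
  -- construction
  have hn : 0 < n := lt_of_lt_of_le hk hkn
  have hnR : (0:ℝ) < (n:ℝ) := by exact_mod_cast hn
  set C : ℝ := Real.log n + 1 with hC
  have hCpos : 0 < C := by
    have : (0:ℝ) ≤ Real.log n := Real.log_nonneg (by exact_mod_cast hn)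
    linarith
  set d : Fin n → ℝ :=
    fun j => if u j = 0 then 1 else Real.exp (-C * ((j:ℕ):ℝ)^2) / |u j| with hd
  have hdpos : ∀ j, 0 < d j := by
    intro j
    rw [hd]
    dsimp only
    split
    · exact one_pos
    · exact div_pos (Real.exp_pos _) (abs_pos.2 (by assumption))
  set f : ℝ → ℝ := fun α => ∑ j, d j * u j * Real.exp (C * ((j:ℕ):ℝ) * α) with hf
  have hfc : Continuous f := by
    rw [hf]
    apply continuous_finset_sum
    intro j _
    exact continuous_const.mul (Real.continuous_exp.comp (continuous_const.mul continuous_id))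
  -- the key sign estimate
  have hkey : ∀ j₀ : Fin n, u j₀ ≠ 0 → 0 < u j₀ * f (2 * ((j₀:ℕ):ℝ)) := by
    intro j₀ hj₀
    have hEpos : (0:ℝ) < Real.exp (C * ((j₀:ℕ):ℝ)^2) := Real.exp_pos _
    have hBapos : (0:ℝ) < |u j₀| := abs_pos.2 hj₀
    have hdj₀ : d j₀ = Real.exp (-C * ((j₀:ℕ):ℝ)^2) / |u j₀| := by rw [hd]; simp [hj₀]
    have hbound : ∀ j : Fin n, j ≠ j₀ →
        -(|u j₀| * (Real.exp (C * ((j₀:ℕ):ℝ)^2) * Real.exp (-C)))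
          ≤ u j₀ * (d j * u j * Real.exp (C * ((j:ℕ):ℝ) * (2 * ((j₀:ℕ):ℝ)))) := by
      intro j hjne
      by_cases hz : u j = 0
      · rw [hz]
        simp only [mul_zero, zero_mul]
        have : (0:ℝ) ≤ |u j₀| * (Real.exp (C * ((j₀:ℕ):ℝ)^2) * Real.exp (-C)) := by positivity
        linarith
      · have hdj : d j = Real.exp (-C * ((j:ℕ):ℝ)^2) / |u j| := by rw [hd]; simp [hz]
        have h1 : u j₀ * (d j * u j * Real.exp (C * ((j:ℕ):ℝ) * (2 * ((j₀:ℕ):ℝ))))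
            = (u j₀ * u j / |u j|) *
              (Real.exp (-C * ((j:ℕ):ℝ)^2) * Real.exp (C * ((j:ℕ):ℝ) * (2 * ((j₀:ℕ):ℝ)))) := by
          rw [hdj]; ring
        have habs : abs (u j₀ * u j / abs (u j)) = abs (u j₀) := by
          rw [abs_div, abs_mul, abs_abs, mul_div_assoc, div_self (abs_ne_zero.2 hz), mul_one]
        have h2 : -abs (u j₀) ≤ u j₀ * u j / abs (u j) := by
          calc -abs (u j₀) = -abs (u j₀ * u j / abs (u j)) := by rw [habs]
          _ ≤ _ := neg_abs_le _
        have h3 : Real.exp (-C * ((j:ℕ):ℝ)^2) * Real.exp (C * ((j:ℕ):ℝ) * (2 * ((j₀:ℕ):ℝ)))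
            ≤ Real.exp (C * ((j₀:ℕ):ℝ)^2) * Real.exp (-C) := by
          rw [← Real.exp_add, ← Real.exp_add]
          apply Real.exp_le_exp.2
          have hne : (j:ℕ) ≠ (j₀:ℕ) := fun hcon => hjne (Fin.ext hcon)
          have hsq : 1 ≤ (((j:ℕ):ℝ) - ((j₀:ℕ):ℝ))^2 := by
            rcases lt_or_gt_of_ne hne with h | h
            · have h' : ((j:ℕ):ℝ) + 1 ≤ ((j₀:ℕ):ℝ) := by exact_mod_cast h
              nlinarith
            · have h' : ((j₀:ℕ):ℝ) + 1 ≤ ((j:ℕ):ℝ) := by exact_mod_cast h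
              nlinarith
          nlinarith
        have hXpos : 0 < Real.exp (-C * ((j:ℕ):ℝ)^2)
            * Real.exp (C * ((j:ℕ):ℝ) * (2 * ((j₀:ℕ):ℝ))) := by positivity
        calc -(|u j₀| * (Real.exp (C * ((j₀:ℕ):ℝ)^2) * Real.exp (-C)))
            ≤ -(|u j₀| * (Real.exp (-C * ((j:ℕ):ℝ)^2)
              * Real.exp (C * ((j:ℕ):ℝ) * (2 * ((j₀:ℕ):ℝ))))) := by nlinarith
        _ ≤ (u j₀ * u j / |u j|) *
              (Real.exp (-C * ((j:ℕ):ℝ)^2) * Real.exp (C * ((j:ℕ):ℝ) * (2 * ((j₀:ℕ):ℝ)))) := by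
            nlinarith
        _ = _ := h1.symm
    have hmain : u j₀ * (d j₀ * u j₀ * Real.exp (C * ((j₀:ℕ):ℝ) * (2 * ((j₀:ℕ):ℝ))))
        = |u j₀| * Real.exp (C * ((j₀:ℕ):ℝ)^2) := by
      rw [hdj₀]
      have h5 : Real.exp (-C * ((j₀:ℕ):ℝ)^2) * Real.exp (C * ((j₀:ℕ):ℝ) * (2 * ((j₀:ℕ):ℝ)))
          = Real.exp (C * ((j₀:ℕ):ℝ)^2) := by
        rw [← Real.exp_add]; congr 1; ring
      have h6 : u j₀ * u j₀ = |u j₀| * |u j₀| := (abs_mul_abs_self _).symm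
      calc u j₀ * (Real.exp (-C * ((j₀:ℕ):ℝ)^2) / |u j₀| * u j₀
            * Real.exp (C * ((j₀:ℕ):ℝ) * (2 * ((j₀:ℕ):ℝ))))
          = (u j₀ * u j₀) * (Real.exp (-C * ((j₀:ℕ):ℝ)^2)
            * Real.exp (C * ((j₀:ℕ):ℝ) * (2 * ((j₀:ℕ):ℝ)))) / |u j₀| := by ring
      _ = |u j₀| * |u j₀| * Real.exp (C * ((j₀:ℕ):ℝ)^2) / |u j₀| := by rw [h5, h6]
      _ = |u j₀| * Real.exp (C * ((j₀:ℕ):ℝ)^2) := by field_simp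
    have hsplit : u j₀ * f (2 * ((j₀:ℕ):ℝ))
        = u j₀ * (d j₀ * u j₀ * Real.exp (C * ((j₀:ℕ):ℝ) * (2 * ((j₀:ℕ):ℝ))))
          + ∑ j ∈ Finset.univ.erase j₀,
            u j₀ * (d j * u j * Real.exp (C * ((j:ℕ):ℝ) * (2 * ((j₀:ℕ):ℝ)))) := by
      rw [hf]
      simp only
      rw [Finset.mul_sum]
      exact (Finset.add_sum_erase _ _ (Finset.mem_univ j₀)).symm
    have hsum : -((n:ℝ) * (|u j₀| * (Real.exp (C * ((j₀:ℕ):ℝ)^2) * Real.exp (-C))))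
        ≤ ∑ j ∈ Finset.univ.erase j₀,
            u j₀ * (d j * u j * Real.exp (C * ((j:ℕ):ℝ) * (2 * ((j₀:ℕ):ℝ)))) := by
      have h1 : ∑ _j ∈ Finset.univ.erase j₀,
            (-(|u j₀| * (Real.exp (C * ((j₀:ℕ):ℝ)^2) * Real.exp (-C))))
          ≤ ∑ j ∈ Finset.univ.erase j₀,
            u j₀ * (d j * u j * Real.exp (C * ((j:ℕ):ℝ) * (2 * ((j₀:ℕ):ℝ)))) :=
        Finset.sum_le_sum (fun j hj => hbound j (Finset.ne_of_mem_erase hj))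
      have h2 : ∑ _j ∈ Finset.univ.erase j₀,
          (-(|u j₀| * (Real.exp (C * ((j₀:ℕ):ℝ)^2) * Real.exp (-C))))
          = -(((Finset.univ.erase j₀).card : ℝ)
            * (|u j₀| * (Real.exp (C * ((j₀:ℕ):ℝ)^2) * Real.exp (-C)))) := by
        rw [Finset.sum_const, nsmul_eq_mul]; ring
      have hcard : ((Finset.univ.erase j₀).card : ℝ) ≤ (n:ℝ) := by
        have h3 : (Finset.univ.erase j₀).card ≤ n := by
          calc (Finset.univ.erase j₀).card ≤ (Finset.univ : Finset (Fin n)).card :=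
            Finset.card_le_card (Finset.erase_subset _ _)
          _ = n := by simp
        exact_mod_cast h3
      have hB : (0:ℝ) ≤ |u j₀| * (Real.exp (C * ((j₀:ℕ):ℝ)^2) * Real.exp (-C)) := by positivity
      calc -((n:ℝ) * (|u j₀| * (Real.exp (C * ((j₀:ℕ):ℝ)^2) * Real.exp (-C))))
          ≤ -(((Finset.univ.erase j₀).card : ℝ)
            * (|u j₀| * (Real.exp (C * ((j₀:ℕ):ℝ)^2) * Real.exp (-C)))) := by nlinarith
      _ = _ := h2.symm
      _ ≤ _ := h1
    have hfinal : (n:ℝ) * Real.exp (-C) = Real.exp (-1) := by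
      rw [show -C = -Real.log n + -1 by rw [hC]; ring, Real.exp_add, Real.exp_neg,
        Real.exp_log hnR]
      field_simp
    have hlt1 : Real.exp (-1:ℝ) < 1 := by
      rw [show (1:ℝ) = Real.exp 0 by rw [Real.exp_zero]]
      exact Real.exp_lt_exp.2 (by norm_num)
    have hges : u j₀ * f (2 * ((j₀:ℕ):ℝ))
        ≥ |u j₀| * Real.exp (C * ((j₀:ℕ):ℝ)^2)
          - (n:ℝ) * (|u j₀| * (Real.exp (C * ((j₀:ℕ):ℝ)^2) * Real.exp (-C))) := by
      rw [hsplit, hmain]; linarith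
    have h9 : (n:ℝ) * (|u j₀| * (Real.exp (C * ((j₀:ℕ):ℝ)^2) * Real.exp (-C)))
        = |u j₀| * Real.exp (C * ((j₀:ℕ):ℝ)^2) * Real.exp (-1:ℝ) := by
      rw [← hfinal]; ring
    rw [h9] at hges
    nlinarith [mul_pos hBapos hEpos]
  -- roots of f
  have hroots : ∀ t : Fin k, ∃ α ∈ Ioo (2 * ((q t.castSucc : ℕ):ℝ)) (2 * ((q t.succ : ℕ):ℝ)),
      f α = 0 := by
    intro t
    have hlt : (2:ℝ) * ((q t.castSucc : ℕ):ℝ) < 2 * ((q t.succ : ℕ):ℝ) := by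
      have h1 : q t.castSucc < q t.succ := hqmono Fin.castSucc_lt_succ
      have h2 : ((q t.castSucc : ℕ):ℝ) < ((q t.succ : ℕ):ℝ) := by exact_mod_cast h1
      linarith
    apply exists_root_of_sign_change hfc hlt
    have h1 := hkey (q t.castSucc) (hqmem _)
    have h2 := hkey (q t.succ) (hqmem _)
    have h3 := hflip t
    have h4 : f (2 * ((q t.castSucc : ℕ):ℝ)) * u (q t.succ) < 0 := sgn_trans_neg h1 h3
    have h5 : f (2 * ((q t.succ : ℕ):ℝ)) * f (2 * ((q t.castSucc : ℕ):ℝ)) < 0 :=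
      sgn_trans_neg h2 (by rw [mul_comm]; exact h4)
    rw [mul_comm]
    exact h5
  choose α hα hαroot using hroots
  have hαmono : StrictMono α := by
    intro t t' h
    have h1 : α t < 2 * ((q t.succ : ℕ):ℝ) := (hα t).2
    have h2 : 2 * ((q t'.castSucc : ℕ):ℝ) < α t' := (hα t').1
    have h3 : q t.succ ≤ q t'.castSucc := by
      apply hqmono.monotone
      simp only [Fin.le_def, Fin.val_succ, Fin.coe_castSucc]
      exact h
    have h4 : ((q t.succ : ℕ):ℝ) ≤ ((q t'.castSucc : ℕ):ℝ) := by exact_mod_cast h3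
    linarith
  -- the matrix
  refine ⟨Matrix.of fun i j => d j * Real.exp (C * ((j:ℕ):ℝ) * α i), ?_, ?_⟩
  · -- totally positive
    intro S hS
    rw [minorCols_eq]
    have hentry : (Matrix.of fun i j => d j * Real.exp (C * ((j:ℕ):ℝ) * α i)).submatrix
          id (S.orderEmbOfFin hS)
        = Matrix.of fun (i : Fin k) (t : Fin k) =>
            (fun t' => d (S.orderEmbOfFin hS t')) t
              * (Matrix.of fun (i' : Fin k) (t' : Fin k) =>
                  ((Real.exp (C * (((S.orderEmbOfFin hS t' : Fin n) : ℕ):ℝ))) ^ (α i') : ℝ)) i t := by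
      ext i t
      simp only [Matrix.submatrix_apply, Matrix.of_apply, id_eq]
      rw [exp_rpow']
    rw [hentry, Matrix.det_mul_row]
    apply mul_pos
    · exact Finset.prod_pos (fun t _ => hdpos _)
    · apply gv_det_pos
      · intro t; exact Real.exp_pos _
      · intro t t' h
        apply Real.exp_lt_exp.2
        have h1 : ((S.orderEmbOfFin hS) t : Fin n) < (S.orderEmbOfFin hS) t' :=
          (S.orderEmbOfFin hS).strictMono h
        have h2 : (((S.orderEmbOfFin hS t : Fin n) : ℕ):ℝ)
            < (((S.orderEmbOfFin hS t' : Fin n) : ℕ):ℝ) := by exact_mod_cast h1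
        nlinarith
      · exact hαmono
  · -- kernel condition
    funext i
    have h1 : ((Matrix.of fun i j => d j * Real.exp (C * ((j:ℕ):ℝ) * α i)).mulVec u) i
        = ∑ j, d j * u j * Real.exp (C * ((j:ℕ):ℝ) * α i) := by
      simp only [Matrix.mulVec, dotProduct, Matrix.of_apply]
      exact Finset.sum_congr rfl (fun j _ => by ring)
    have h2 : f (α i) = 0 := hαroot i
    rw [hf] at h2
    simp only at h2
    rw [Pi.zero_apply, h1, h2]

end Aux

set_option maxHeartbeats 1000000 in
/-- For nonzero `u ∈ ℝ^n`, there is a totally positive `k × n` matrix `A`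
with `A u = 0` (i.e. the hyperplane `H_u` contains a totally positive subspace of projective
dimension `k-1`) iff `var(u) ≥ k`. -/
theorem stmt4 (k n : ℕ) (hk : 1 ≤ k) (hkn : k ≤ n) (u : Fin n → ℝ) (hu : u ≠ 0) :
    (∃ A : Matrix (Fin k) (Fin n) ℝ, IsTotallyPos A ∧ A.mulVec u = 0) ↔ k ≤ signVar u := by
  constructor
  · rintro ⟨A, hA, hAu⟩
    exact stmt4_mp k n hk hkn u hu A hA hAu
  · intro h
    exact stmt4_mpr k n hk hkn u hu h
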